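/- Let A be a C*-algebra, G a discrete amenable group acting on A by an action β, and D ⊆ A a β-invariant hereditary C*-subalgebra. Then for every finite subset M ⊆ G, every finite subset F ⊆ D, and every η > 0, there exists a positive contraction q ∈ D such that ‖β_s(q) − q‖ < η for all s ∈ M, and ‖qa − a‖ < η, ‖aq − a‖ < η, ‖qa − aq‖ < η for all a ∈ F. -/

import Mathlib

open scoped symmDiff

/-- The Følner condition for a discrete group `G` (equivalent to amenability): for every
finite set `M` and `ε > 0` there is a nonempty finite set `K` with
`|sK ∆ K| ≤ ε |K|` for all `s ∈ M`. -/
def FolnerCondition (G : Type*) [Group G] [DecidableEq G] : Prop :=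
  ∀ (M : Finset G) (ε : ℝ), 0 < ε → ∃ K : Finset G, K.Nonempty ∧
    ∀ s ∈ M, ((K.image (s * ·)) ∆ K).card ≤ ε * K.card

open Unitization in
/-- Auxiliary lemma: given `0 ≤ h` and `δ > 0` there is a positive contraction `e` dominated
by `δ⁻¹ • h` which acts as an approximate unit, up to `√δ`, on every `z` with
`z * star z ≤ h`. -/
lemma aux_approx_unit {A : Type*} [NonUnitalCStarAlgebra A] [PartialOrder A] [StarOrderedRing A]
    {h : A} (hh : 0 ≤ h) {δ : ℝ} (hδ : 0 < δ) :
    ∃ e : A, 0 ≤ e ∧ ‖e‖ ≤ 1 ∧ e ≤ δ⁻¹ • h ∧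
      ∀ z : A, z * star z ≤ h → ‖e * z - z‖ ≤ Real.sqrt δ := by
  set f : ℝ → ℝ := fun t => t / (t + δ) with hf_def
  have hq : ∀ t ∈ quasispectrum ℝ h, 0 ≤ t := quasispectrum_nonneg_of_nonneg h hh
  have hf0 : f 0 = 0 := by simp [hf_def]
  have hfc : ContinuousOn f (quasispectrum ℝ h) := by
    apply ContinuousOn.div continuousOn_id (by fun_prop)
    intro t ht
    have := hq t ht
    positivity
  refine ⟨cfcₙ f h, cfcₙ_nonneg fun t ht => ?_, ?_, ?_, ?_⟩
  · have := hq t ht; positivity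
  · apply norm_cfcₙ_le
    intro t ht
    have := hq t ht
    rw [Real.norm_eq_abs, abs_of_nonneg (by positivity)]
    rw [div_le_one (by positivity)]
    linarith
  · have hid : cfcₙ (fun t : ℝ => δ⁻¹ • t) h = δ⁻¹ • h := by
      rw [cfcₙ_smul δ⁻¹ _ h, cfcₙ_id' ℝ h]
    rw [← hid]
    refine cfcₙ_mono (fun t ht => ?_) hfc (by fun_prop) hf0 (by simp)
    have ht0 := hq t ht
    simp only [smul_eq_mul, hf_def]
    rw [div_le_iff₀ (by positivity)]
    rw [inv_mul_eq_div, div_mul_eq_mul_div, le_div_iff₀ hδ]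
    nlinarith
  · intro z hz
    have key : ‖cfcₙ f h * z - z‖ ^ 2 ≤ δ := by
      set E : Unitization ℂ A := cfc f (h : Unitization ℂ A) with hE_def
      have hE : ((cfcₙ f h : A) : Unitization ℂ A) = E := real_cfcₙ_eq_cfc_inr h f hf0
      have hhsa : IsSelfAdjoint h := hh.isSelfAdjoint
      have hHsa : IsSelfAdjoint (h : Unitization ℂ A) := hhsa.inr ℂ
      have hH0 : (0 : Unitization ℂ A) ≤ (h : Unitization ℂ A) := inr_nonneg_iff.mpr hh
      have hEsa : IsSelfAdjoint E := cfc_predicate f (h : Unitization ℂ A)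
      set x : Unitization ℂ A := (E - 1) * (z : Unitization ℂ A) with hx_def
      have hinr : ((cfcₙ f h * z - z : A) : Unitization ℂ A) = x := by
        rw [inr_sub ℂ, inr_mul ℂ, hE, hx_def, sub_mul, one_mul]
      have hnorm : ‖cfcₙ f h * z - z‖ ^ 2 = ‖x * star x‖ := by
        rw [← hinr, CStarRing.norm_self_mul_star, ← norm_inr (𝕜 := ℂ) (cfcₙ f h * z - z), sq]
      rw [hnorm]
      have hxsx : x * star x
          = (E - 1) * ((z : Unitization ℂ A) * star (z : Unitization ℂ A)) * (E - 1) := by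
        have : star x = star (z : Unitization ℂ A) * (E - 1) := by
          rw [hx_def, star_mul, (hEsa.sub (IsSelfAdjoint.one _)).star_eq]
        rw [this, hx_def]
        simp only [mul_assoc]
      have hzz : (z : Unitization ℂ A) * star (z : Unitization ℂ A) ≤ (h : Unitization ℂ A) := by
        rw [← inr_star, ← inr_mul]
        rw [inr_le_iff _ _ (by simpa [star_mul] using (IsSelfAdjoint.star_mul_self z).star) hhsa]
        · exact hz
      have hconj : x * star x ≤ (E - 1) * (h : Unitization ℂ A) * (E - 1) := by
        rw [hxsx]
        have := star_left_conjugate_le_conjugate hzz (E - 1)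
        rwa [(hEsa.sub (IsSelfAdjoint.one _)).star_eq] at this
      refine le_trans (CStarAlgebra.norm_le_norm_of_nonneg_of_le (mul_star_self_nonneg x) hconj) ?_
      have hspec : ∀ t ∈ spectrum ℝ (h : Unitization ℂ A), 0 ≤ t :=
        spectrum_nonneg_of_nonneg hH0
      have hfc' : ContinuousOn f (spectrum ℝ (h : Unitization ℂ A)) := by
        apply ContinuousOn.div continuousOn_id (by fun_prop)
        intro t ht
        have := hspec t ht
        positivity
      have hEm1 : E - 1 = cfc (fun t => f t - 1) (h : Unitization ℂ A) := by
        rw [cfc_sub f (fun _ => (1:ℝ)) (h : Unitization ℂ A) hfc' (by fun_prop),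
          cfc_const_one ℝ (h : Unitization ℂ A)]
      have hcalc : cfc (fun t => (f t - 1) * t * (f t - 1)) (h : Unitization ℂ A)
          = (E - 1) * (h : Unitization ℂ A) * (E - 1) := by
        rw [cfc_mul (fun t => (f t - 1) * t) (fun t => f t - 1) (h : Unitization ℂ A)
            ((hfc'.sub (by fun_prop)).mul continuousOn_id) (hfc'.sub (by fun_prop)),
          cfc_mul (fun t => f t - 1) (fun t => t) (h : Unitization ℂ A)
            (hfc'.sub (by fun_prop)) continuousOn_id,
          cfc_id' ℝ (h : Unitization ℂ A) hHsa, ← hEm1]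
      rw [← hcalc]
      apply norm_cfc_le hδ.le
      intro t ht
      have ht0 := hspec t ht
      have hden : 0 < t + δ := by positivity
      have hft : f t - 1 = -(δ / (t + δ)) := by
        rw [hf_def]
        field_simp
        ring
      rw [hft, Real.norm_eq_abs]
      have heq : -(δ / (t + δ)) * t * -(δ / (t + δ)) = δ / (t + δ) * t * (δ / (t + δ)) := by ring
      rw [heq, abs_of_nonneg (by positivity)]
      rw [div_mul_eq_mul_div, div_mul_div_comm, div_le_iff₀ (by positivity)]
      nlinarith [mul_nonneg (mul_nonneg hδ.le ht0) ht0, mul_nonneg (mul_nonneg hδ.le ht0) hδ.le,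
        mul_pos (mul_pos hδ hδ) hδ]
    have h0 : (0:ℝ) ≤ ‖cfcₙ f h * z - z‖ := norm_nonneg _
    nlinarith [Real.sq_sqrt hδ.le, Real.sqrt_nonneg δ, norm_nonneg (cfcₙ f h * z - z),
      Real.sqrt_le_sqrt key, Real.sqrt_sq h0]

/-- Let `A` be a C*-algebra, `G` an amenable discrete group acting on `A` by
*-automorphisms `β`, and `D ⊆ A` a `β`-invariant hereditary C*-subalgebra. Then for every
finite `M ⊆ G`, finite `F ⊆ D` and `η > 0` there is a positive contraction `q ∈ D` with
`‖β_s(q) − q‖ < η` for `s ∈ M` and `‖qa − a‖, ‖aq − a‖, ‖qa − aq‖ < η` for `a ∈ F`. -/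
theorem exists_almost_invariant_approximate_unit
    (A : Type*) [NonUnitalCStarAlgebra A] [PartialOrder A] [StarOrderedRing A]
    (G : Type*) [Group G] [DecidableEq G] (hamen : FolnerCondition G)
    (β : G → A ≃⋆ₐ[ℂ] A) (hβ : ∀ g h x, β (g * h) x = β g (β h x))
    (D : NonUnitalStarSubalgebra ℂ A) (hDclosed : IsClosed (D : Set A))
    (hDher : ∀ a : A, 0 ≤ a → ∀ d ∈ D, a ≤ d → a ∈ D)
    (hDinv : ∀ g : G, ∀ d ∈ D, β g d ∈ D)
    (M : Finset G) (F : Finset A) (hF : ∀ a ∈ F, a ∈ D) (η : ℝ) (hη : 0 < η) :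
    ∃ q ∈ D, 0 ≤ q ∧ ‖q‖ ≤ 1 ∧
      (∀ s ∈ M, ‖β s q - q‖ < η) ∧
      ∀ a ∈ F, ‖q * a - a‖ < η ∧ ‖a * q - a‖ < η ∧ ‖q * a - a * q‖ < η := by
  classical
  have hη3 : 0 < η / 3 := by positivity
  have hδ : 0 < (η / 3) ^ 2 := by positivity
  obtain ⟨K, hKne, hK⟩ := hamen M (η / 2) (by positivity)
  have hKc : (0:ℝ) < (K.card : ℝ) := by exact_mod_cast Finset.card_pos.mpr hKne
  -- basic facts about the action
  have hβ1 : ∀ x : A, β 1 x = x := by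
    intro x
    have h11 := hβ 1 1 x
    rw [one_mul] at h11
    exact ((β 1).injective h11.symm)
  have hβinv : ∀ (g : G) (x : A), β g (β g⁻¹ x) = x := by
    intro g x
    rw [← hβ g g⁻¹ x, mul_inv_cancel, hβ1]
  have hβnorm : ∀ (g : G) (x : A), ‖β g x‖ = ‖x‖ := fun g x =>
    NonUnitalStarAlgHom.norm_map (β g) (β g).injective x
  have hβnonneg : ∀ (g : G) (x : A), 0 ≤ x → 0 ≤ β g x := by
    intro g x hx
    have hs : star (CFC.sqrt x) = CFC.sqrt x := (IsSelfAdjoint.of_nonneg (CFC.sqrt_nonneg x)).star_eq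
    have hx' : x = star (CFC.sqrt x) * CFC.sqrt x := by
      rw [hs, CFC.sqrt_mul_sqrt_self x hx]
    rw [hx', map_mul, map_star]
    exact star_mul_self_nonneg _
  -- the positive element `h` dominating all relevant translates
  set b : G × A → A := fun p => β p.1⁻¹ p.2 with hb_def
  set h : A := ∑ p ∈ K ×ˢ F, (b p * star (b p) + star (b p) * b p) with hh_def
  have hterm : ∀ p : G × A, 0 ≤ b p * star (b p) + star (b p) * b p := fun p =>
    add_nonneg (mul_star_self_nonneg _) (star_mul_self_nonneg _)
  have hh0 : 0 ≤ h := Finset.sum_nonneg fun p _ => hterm p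
  have hbD : ∀ p ∈ K ×ˢ F, b p ∈ D := fun p hp =>
    hDinv _ _ (hF p.2 (Finset.mem_product.mp hp).2)
  have hhD : h ∈ D := sum_mem fun p hp =>
    add_mem (mul_mem (hbD p hp) (star_mem (hbD p hp)))
      (mul_mem (star_mem (hbD p hp)) (hbD p hp))
  obtain ⟨e, he0, he1, hele, heapp⟩ := aux_approx_unit hh0 hδ
  rw [Real.sqrt_sq hη3.le] at heapp
  have heD : e ∈ D := by
    refine hDher e he0 (((η / 3) ^ 2)⁻¹ • h) ?_ hele
    rw [← algebraMap_smul ℂ ((((η : ℝ) / 3) ^ 2)⁻¹ : ℝ) h]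
    exact SMulMemClass.smul_mem _ hhD
  -- approximate unit estimates on translates
  have hkey : ∀ g ∈ K, ∀ a ∈ F,
      ‖e * β g⁻¹ a - β g⁻¹ a‖ ≤ η / 3 ∧ ‖β g⁻¹ a * e - β g⁻¹ a‖ ≤ η / 3 := by
    intro g hg a ha
    have hp : (g, a) ∈ K ×ˢ F := Finset.mem_product.mpr ⟨hg, ha⟩
    have hle := Finset.single_le_sum (f := fun p => b p * star (b p) + star (b p) * b p)
      (fun p _ => hterm p) hp
    have h1 : β g⁻¹ a * star (β g⁻¹ a) ≤ h :=
      le_trans (le_add_of_nonneg_right (star_mul_self_nonneg _)) hle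
    have h2 : star (β g⁻¹ a) * star (star (β g⁻¹ a)) ≤ h := by
      rw [star_star]
      exact le_trans (le_add_of_nonneg_left (mul_star_self_nonneg _)) hle
    refine ⟨heapp _ h1, ?_⟩
    have h3 := heapp _ h2
    calc ‖β g⁻¹ a * e - β g⁻¹ a‖ = ‖star (β g⁻¹ a * e - β g⁻¹ a)‖ := (norm_star _).symm
      _ = ‖e * star (β g⁻¹ a) - star (β g⁻¹ a)‖ := by
          rw [star_sub, star_mul, (IsSelfAdjoint.of_nonneg he0).star_eq]
      _ ≤ η / 3 := h3
  -- the averaged element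
  set c : ℝ := (K.card : ℝ) with hc_def
  set q : A := c⁻¹ • ∑ g ∈ K, β g e with hq_def
  have hS : ∀ S : Finset G, ‖∑ g ∈ S, β g e‖ ≤ (S.card : ℝ) := by
    intro S
    refine le_trans (norm_sum_le _ _) ?_
    calc ∑ g ∈ S, ‖β g e‖ ≤ ∑ g ∈ S, 1 := Finset.sum_le_sum fun g _ => by
          rw [hβnorm]; exact he1
      _ = S.card := by simp
  have havg : ∀ (v : G → A) (r : ℝ), 0 ≤ r → (∀ g ∈ K, ‖v g‖ ≤ r) →
      ‖c⁻¹ • ∑ g ∈ K, v g‖ ≤ r := by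
    intro v r hr hv
    rw [norm_smul, Real.norm_eq_abs, abs_of_nonneg (by positivity)]
    have hsum : ‖∑ g ∈ K, v g‖ ≤ c * r := by
      refine le_trans (norm_sum_le _ _) ?_
      calc ∑ g ∈ K, ‖v g‖ ≤ ∑ g ∈ K, r := Finset.sum_le_sum hv
        _ = c * r := by rw [Finset.sum_const, nsmul_eq_mul, hc_def]
    calc c⁻¹ * ‖∑ g ∈ K, v g‖ ≤ c⁻¹ * (c * r) :=
          mul_le_mul_of_nonneg_left hsum (by positivity)
      _ = r := by field_simp
  refine ⟨q, ?_, ?_, ?_, ?_, ?_⟩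
  · -- q ∈ D
    rw [hq_def, ← algebraMap_smul ℂ (c⁻¹ : ℝ)]
    exact SMulMemClass.smul_mem _ (sum_mem fun g _ => hDinv g e heD)
  · -- 0 ≤ q
    exact smul_nonneg (by positivity) (Finset.sum_nonneg fun g _ => hβnonneg g e he0)
  · -- ‖q‖ ≤ 1
    rw [hq_def, norm_smul, Real.norm_eq_abs, abs_of_nonneg (by positivity)]
    calc c⁻¹ * ‖∑ g ∈ K, β g e‖ ≤ c⁻¹ * c :=
          mul_le_mul_of_nonneg_left (hS K) (by positivity)
      _ = 1 := inv_mul_cancel₀ hKc.ne'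
  · -- almost invariance
    intro s hs
    set K' : Finset G := K.image (s * ·) with hK'_def
    have himg : β s (∑ g ∈ K, β g e) = ∑ g ∈ K', β g e := by
      rw [map_sum, hK'_def, Finset.sum_image (fun x _ y _ hxy => mul_left_cancel hxy)]
      exact Finset.sum_congr rfl fun g _ => (hβ s g e).symm
    have hsmul : β s q = c⁻¹ • β s (∑ g ∈ K, β g e) := by
      rw [hq_def, ← algebraMap_smul ℂ (c⁻¹ : ℝ), map_smul, algebraMap_smul]
    rw [hsmul, himg, hq_def, ← smul_sub, ← Finset.sum_sdiff_sub_sum_sdiff]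
    rw [norm_smul, Real.norm_eq_abs, abs_of_nonneg (by positivity)]
    have hcard : ((K' \ K).card : ℝ) + ((K \ K').card : ℝ) ≤ η / 2 * c := by
      have hKs := hK s hs
      have hsd : (K' ∆ K).card = (K' \ K).card + (K \ K').card := by
        rw [symmDiff_def, Finset.sup_eq_union]
        exact Finset.card_union_of_disjoint disjoint_sdiff_sdiff
      have : (((K' ∆ K).card : ℕ) : ℝ) ≤ η / 2 * c := hKs
      rw [hsd] at this
      push_cast at this
      linarith
    have hnorm2 : ‖∑ g ∈ K' \ K, β g e - ∑ g ∈ K \ K', β g e‖ ≤ η / 2 * c := by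
      refine le_trans (norm_sub_le _ _) ?_
      refine le_trans (add_le_add (hS _) (hS _)) hcard
    calc c⁻¹ * ‖∑ g ∈ K' \ K, β g e - ∑ g ∈ K \ K', β g e‖ ≤ c⁻¹ * (η / 2 * c) :=
          mul_le_mul_of_nonneg_left hnorm2 (by positivity)
      _ = η / 2 := by field_simp
      _ < η := by linarith
  · -- approximate unit properties
    intro a ha
    have hconst : c⁻¹ • ∑ _g ∈ K, a = a := by
      rw [Finset.sum_const, ← Nat.cast_smul_eq_nsmul ℝ, smul_smul, ← hc_def,
        inv_mul_cancel₀ hKc.ne', one_smul]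
    have hterm1 : ∀ g ∈ K, ‖β g e * a - a‖ ≤ η / 3 := by
      intro g hg
      have heq : β g e * a - a = β g (e * β g⁻¹ a - β g⁻¹ a) := by
        rw [map_sub, map_mul, hβinv]
      rw [heq, hβnorm]
      exact (hkey g hg a ha).1
    have hterm2 : ∀ g ∈ K, ‖a * β g e - a‖ ≤ η / 3 := by
      intro g hg
      have heq : a * β g e - a = β g (β g⁻¹ a * e - β g⁻¹ a) := by
        rw [map_sub, map_mul, hβinv]
      rw [heq, hβnorm]
      exact (hkey g hg a ha).2
    have hqa : q * a - a = c⁻¹ • ∑ g ∈ K, (β g e * a - a) := by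
      rw [Finset.sum_sub_distrib, smul_sub, hconst, hq_def, smul_mul_assoc, Finset.sum_mul]
    have haq : a * q - a = c⁻¹ • ∑ g ∈ K, (a * β g e - a) := by
      rw [Finset.sum_sub_distrib, smul_sub, hconst, hq_def, mul_smul_comm, Finset.mul_sum]
    have h1 : ‖q * a - a‖ ≤ η / 3 := by
      rw [hqa]; exact havg _ _ hη3.le hterm1
    have h2 : ‖a * q - a‖ ≤ η / 3 := by
      rw [haq]; exact havg _ _ hη3.le hterm2
    refine ⟨lt_of_le_of_lt h1 (by linarith), lt_of_le_of_lt h2 (by linarith), ?_⟩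
    have h3 : q * a - a * q = (q * a - a) - (a * q - a) := by noncomm_ring
    calc ‖q * a - a * q‖ = ‖(q * a - a) - (a * q - a)‖ := by rw [h3]
      _ ≤ ‖q * a - a‖ + ‖a * q - a‖ := norm_sub_le _ _
      _ ≤ η / 3 + η / 3 := add_le_add h1 h2
      _ < η := by linarith
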